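/- The determinant det((1/(2t))·sech(π(y_j - x_i)/(2t)))_{i,j=1}^n equals (2t)^{-n} ∏_{i,j} sech(π(y_j - x_i)/(2t)) · ∏_{i<j} sinh(π(x_i - x_j)/(2t)) sinh(π(y_i - y_j)/(2t)). -/

import Mathlib

open Real Finset Matrix

theorem cauchy_determinant {F : Type*} [Field F] :
    ∀ (n : ℕ) (x y : Fin n → F), (∀ i j, x i + y j ≠ 0) →
      Matrix.det (Matrix.of fun i j => (x i + y j)⁻¹) =
        (∏ i, ∏ j, (x i + y j)⁻¹) * ∏ i, ∏ j ∈ Finset.Ioi i, ((x j - x i) * (y j - y i)) := by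
  intro n
  induction n with
  | zero => intro x y _; simp [Matrix.det_fin_zero]
  | succ n ih =>
    intro x y h
    set B : Matrix (Fin (n+1)) (Fin (n+1)) F := Matrix.of fun i j =>
      if i = 0 then (x 0 + y j)⁻¹ else (x 0 - x i) * ((x i + y j)⁻¹ * (x 0 + y j)⁻¹) with hB
    have step1 : Matrix.det (Matrix.of fun i j : Fin (n+1) => (x i + y j)⁻¹) = B.det := by
      refine det_eq_of_forall_row_eq_smul_add_const (fun i => if i = 0 then 0 else 1) 0
        (if_pos rfl) ?_
      intro i j
      by_cases hi : i = 0
      · simp [hB, hi]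
      · simp only [hB, of_apply, if_neg hi, if_pos rfl, if_true, one_mul]
        have h1 := h i j
        have h2 := h 0 j
        field_simp
        ring
    have step2 : B = Matrix.of fun i j => (x 0 + y j)⁻¹ *
        ((Matrix.of fun i j : Fin (n+1) =>
          if i = 0 then 1 else (x 0 - x i) * (x i + y j)⁻¹) i j) := by
      ext i j
      by_cases hi : i = 0 <;> simp [hB, hi] <;> ring
    set C : Matrix (Fin (n+1)) (Fin (n+1)) F := Matrix.of fun i j =>
      if i = 0 then 1 else (x 0 - x i) * (x i + y j)⁻¹ with hC
    have step2' : B.det = (∏ j, (x 0 + y j)⁻¹) * C.det := by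
      rw [step2]; exact det_mul_row _ _
    set D : Matrix (Fin (n+1)) (Fin (n+1)) F := Matrix.of fun i j =>
      if i = 0 then 1 else (x i + y j)⁻¹ with hD
    have step3 : C = Matrix.of fun i j => (if i = 0 then 1 else (x 0 - x i)) * D i j := by
      ext i j
      by_cases hi : i = 0 <;> simp [hC, hD, hi]
    have step3' : C.det = (∏ i, if i = 0 then 1 else (x 0 - x i)) * D.det := by
      rw [step3]; exact det_mul_column _ _
    set E : Matrix (Fin (n+1)) (Fin (n+1)) F := Matrix.of fun i j =>
      if j = 0 then D i 0 else (if i = 0 then 0 else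
        (y 0 - y j) * ((x i + y j)⁻¹ * (x i + y 0)⁻¹)) with hE
    have step4 : D.det = E.det := by
      rw [← det_transpose D, ← det_transpose E]
      refine det_eq_of_forall_row_eq_smul_add_const (fun j => if j = 0 then 0 else 1) 0
        (if_pos rfl) ?_
      intro j i
      by_cases hj : j = 0
      · simp [hE, hj]
      · by_cases hi : i = 0
        · simp [hE, hD, hi, hj]
        · simp only [transpose_apply, hE, hD, of_apply, if_neg hi, if_neg hj, if_pos rfl,
            if_true, one_mul]
          have h1 := h i j
          have h2 := h i 0
          field_simp
          ring
    have step5 : E.det = Matrix.det (Matrix.of fun i j : Fin n =>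
        (y 0 - y j.succ) * ((x i.succ + y j.succ)⁻¹ * (x i.succ + y 0)⁻¹)) := by
      rw [det_succ_row_zero]
      rw [Fin.sum_univ_succ]
      have h00 : E 0 0 = 1 := by simp [hE, hD]
      have h0j : ∀ j : Fin n, E 0 j.succ = 0 := by
        intro j; simp [hE, Fin.succ_ne_zero]
      simp only [h00, h0j, mul_zero, zero_mul, Finset.sum_const_zero, add_zero,
        Fin.val_zero, pow_zero, one_mul, Fin.succAbove_zero]
      congr 1
    have step6 : Matrix.det (Matrix.of fun i j : Fin n =>
        (y 0 - y j.succ) * ((x i.succ + y j.succ)⁻¹ * (x i.succ + y 0)⁻¹)) =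
        (∏ j : Fin n, (y 0 - y j.succ)) * ((∏ i : Fin n, (x i.succ + y 0)⁻¹) *
          Matrix.det (Matrix.of fun i j : Fin n => (x i.succ + y j.succ)⁻¹)) := by
      rw [show (Matrix.of fun i j : Fin n =>
          (y 0 - y j.succ) * ((x i.succ + y j.succ)⁻¹ * (x i.succ + y 0)⁻¹)) =
          Matrix.of fun i j : Fin n => (y 0 - y j.succ) *
            ((Matrix.of fun i j : Fin n => (x i.succ + y 0)⁻¹ *
              ((Matrix.of fun i j : Fin n => (x i.succ + y j.succ)⁻¹) i j)) i j) by
        ext i j; simp only [Matrix.of_apply]; ring]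
      rw [det_mul_row]
      congr 1
      exact det_mul_column _ _
    have ihx := ih (fun i => x i.succ) (fun j => y j.succ) (fun i j => h i.succ j.succ)
    rw [step1, step2', step3', step4, step5, step6, ihx]
    -- now pure product manipulation
    simp only [Fin.prod_univ_succ, Fin.prod_Ioi_zero, Fin.prod_Ioi_succ, if_pos rfl,
      Fin.succ_ne_zero, if_neg, ite_false]
    have hsign : (∏ i : Fin n, (x 0 - x i.succ)) * (∏ j : Fin n, (y 0 - y j.succ)) =
        ∏ j : Fin n, ((x j.succ - x 0) * (y j.succ - y 0)) := by
      rw [← Finset.prod_mul_distrib]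
      exact Finset.prod_congr rfl fun i _ => by ring
    simp only [if_true]
    rw [Finset.prod_mul_distrib, ← hsign]
    ring

theorem prod_pair : ∀ (n : ℕ) (g : Fin n → ℝ), (∀ i, g i ≠ 0) →
    ∏ i, ∏ j ∈ Finset.Ioi i, (g i * g j) = (∏ i, g i) ^ n * (∏ i, g i)⁻¹ := by
  intro n
  induction n with
  | zero => intro g _; simp
  | succ n ih =>
    intro g hg
    have hG : (∏ i : Fin n, g i.succ) ≠ 0 := Finset.prod_ne_zero_iff.2 fun i _ => hg i.succ
    have h0 : g 0 ≠ 0 := hg 0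
    simp only [Fin.prod_univ_succ, Fin.prod_Ioi_zero, Fin.prod_Ioi_succ]
    rw [ih (fun i => g i.succ) (fun i => hg i.succ), Finset.prod_mul_distrib,
      Finset.prod_const, Finset.card_univ, Fintype.card_fin]
    field_simp
    ring

theorem stmt_5 (n : ℕ) (t : ℝ) (ht : 0 < t) (x y : Fin n → ℝ) :
    Matrix.det (Matrix.of fun i j : Fin n =>
        (1 / (2 * t)) * (Real.cosh (Real.pi * (y j - x i) / (2 * t)))⁻¹) =
      (2 * t) ^ (-(n : ℤ)) *
        (∏ i, ∏ j, (Real.cosh (Real.pi * (y j - x i) / (2 * t)))⁻¹) *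
        ∏ i, ∏ j ∈ Finset.univ.filter (fun j => i < j),
          (Real.sinh (Real.pi * (x i - x j) / (2 * t)) *
            Real.sinh (Real.pi * (y i - y j) / (2 * t))) := by
  have ht2 : (2 * t) ≠ 0 := by positivity
  set p : Fin n → ℝ := fun i => Real.exp (Real.pi * x i / (2 * t)) with hp
  set q : Fin n → ℝ := fun j => Real.exp (Real.pi * y j / (2 * t)) with hq
  have hp0 : ∀ i, p i ≠ 0 := fun i => (Real.exp_pos _).ne'
  have hq0 : ∀ j, q j ≠ 0 := fun j => (Real.exp_pos _).ne'
  have huv : ∀ i j : Fin n, p i ^ 2 + q j ^ 2 ≠ 0 := fun i j => by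
    have := Real.exp_pos (Real.pi * x i / (2 * t))
    have := Real.exp_pos (Real.pi * y j / (2 * t))
    positivity
  have hcosh : ∀ i j : Fin n, (Real.cosh (Real.pi * (y j - x i) / (2 * t)))⁻¹ =
      2 * (p i * q j) * (p i ^ 2 + q j ^ 2)⁻¹ := by
    intro i j
    have e1 : Real.exp (Real.pi * y j / (2 * t) - Real.pi * x i / (2 * t)) = q j / p i := by
      rw [Real.exp_sub]
    have e2 : Real.exp (-(Real.pi * y j / (2 * t) - Real.pi * x i / (2 * t))) = p i / q j := by
      rw [neg_sub, Real.exp_sub]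
    rw [show Real.pi * (y j - x i) / (2 * t) =
        Real.pi * y j / (2 * t) - Real.pi * x i / (2 * t) by ring,
      Real.cosh_eq, e1, e2, show (q j / p i + p i / q j) / 2 =
        (p i ^ 2 + q j ^ 2) / (2 * (p i * q j)) by
          have := hp0 i; have := hq0 j; field_simp; ring,
      inv_div, div_eq_mul_inv]
  have hsinhx : ∀ i j : Fin n, Real.sinh (Real.pi * (x i - x j) / (2 * t)) =
      (p i ^ 2 - p j ^ 2) * (2 * (p i * p j))⁻¹ := by
    intro i j
    have e1 : Real.exp (Real.pi * x i / (2 * t) - Real.pi * x j / (2 * t)) = p i / p j := by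
      rw [Real.exp_sub]
    have e2 : Real.exp (-(Real.pi * x i / (2 * t) - Real.pi * x j / (2 * t))) = p j / p i := by
      rw [neg_sub, Real.exp_sub]
    rw [show Real.pi * (x i - x j) / (2 * t) =
        Real.pi * x i / (2 * t) - Real.pi * x j / (2 * t) by ring,
      Real.sinh_eq, e1, e2, show (p i / p j - p j / p i) / 2 =
        (p i ^ 2 - p j ^ 2) / (2 * (p i * p j)) by
          have := hp0 i; have := hp0 j; field_simp,
      div_eq_mul_inv]
  have hsinhy : ∀ i j : Fin n, Real.sinh (Real.pi * (y i - y j) / (2 * t)) =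
      (q i ^ 2 - q j ^ 2) * (2 * (q i * q j))⁻¹ := by
    intro i j
    have e1 : Real.exp (Real.pi * y i / (2 * t) - Real.pi * y j / (2 * t)) = q i / q j := by
      rw [Real.exp_sub]
    have e2 : Real.exp (-(Real.pi * y i / (2 * t) - Real.pi * y j / (2 * t))) = q j / q i := by
      rw [neg_sub, Real.exp_sub]
    rw [show Real.pi * (y i - y j) / (2 * t) =
        Real.pi * y i / (2 * t) - Real.pi * y j / (2 * t) by ring,
      Real.sinh_eq, e1, e2, show (q i / q j - q j / q i) / 2 =
        (q i ^ 2 - q j ^ 2) / (2 * (q i * q j)) by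
          have := hq0 i; have := hq0 j; field_simp,
      div_eq_mul_inv]
  have hfilter : ∀ i : Fin n, Finset.univ.filter (fun j => i < j) = Finset.Ioi i :=
    fun i => by ext j; simp
  simp only [hcosh, hsinhx, hsinhy, hfilter]
  -- determinant side
  have hM : (Matrix.of fun i j : Fin n =>
      (1 / (2 * t)) * (2 * (p i * q j) * (p i ^ 2 + q j ^ 2)⁻¹)) =
      Matrix.of fun i j : Fin n => (p i / t) * ((Matrix.of fun i j : Fin n =>
        q j * ((Matrix.of fun i j : Fin n => (p i ^ 2 + q j ^ 2)⁻¹) i j)) i j) := by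
    ext i j
    simp only [Matrix.of_apply]
    have := huv i j
    field_simp
  rw [hM, Matrix.det_mul_column, Matrix.det_mul_row,
    cauchy_determinant n (fun i => p i ^ 2) (fun j => q j ^ 2) huv]
  have hP0 : (∏ i, p i) ≠ 0 := Finset.prod_ne_zero_iff.2 fun i _ => hp0 i
  have hQ0 : (∏ i, q i) ≠ 0 := Finset.prod_ne_zero_iff.2 fun i _ => hq0 i
  have h1 : (∏ i, p i / t) = (∏ i, p i) * (t ^ n)⁻¹ := by
    rw [Finset.prod_div_distrib, Finset.prod_const, Finset.card_univ, Fintype.card_fin,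
      div_eq_mul_inv]
  have h2 : (∏ i, ∏ j, (2 * (p i * q j) * (p i ^ 2 + q j ^ 2)⁻¹)) =
      ((2:ℝ) ^ n * ∏ i, p i) ^ n * ((∏ i, q i) ^ n *
        ∏ i, ∏ j, (p i ^ 2 + q j ^ 2)⁻¹) := by
    have inner : ∀ i, (∏ j, 2 * (p i * q j) * (p i ^ 2 + q j ^ 2)⁻¹) =
        (2 * p i) ^ n * ((∏ j, q j) * ∏ j, (p i ^ 2 + q j ^ 2)⁻¹) := by
      intro i
      calc (∏ j, 2 * (p i * q j) * (p i ^ 2 + q j ^ 2)⁻¹)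
          = ∏ j, (2 * p i) * (q j * (p i ^ 2 + q j ^ 2)⁻¹) :=
            Finset.prod_congr rfl fun j _ => by ring
        _ = (∏ _j : Fin n, (2 * p i)) * ∏ j, (q j * (p i ^ 2 + q j ^ 2)⁻¹) :=
            Finset.prod_mul_distrib
        _ = (2 * p i) ^ n * ((∏ j, q j) * ∏ j, (p i ^ 2 + q j ^ 2)⁻¹) := by
            rw [Finset.prod_const, Finset.card_univ, Fintype.card_fin,
              Finset.prod_mul_distrib]
    calc (∏ i, ∏ j, (2 * (p i * q j) * (p i ^ 2 + q j ^ 2)⁻¹))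
        = ∏ i, ((2 * p i) ^ n * ((∏ j, q j) * ∏ j, (p i ^ 2 + q j ^ 2)⁻¹)) :=
          Finset.prod_congr rfl fun i _ => inner i
      _ = (∏ i, (2 * p i) ^ n) * ∏ i, ((∏ j, q j) * ∏ j, (p i ^ 2 + q j ^ 2)⁻¹) :=
          Finset.prod_mul_distrib
      _ = ((2:ℝ) ^ n * ∏ i, p i) ^ n * ((∏ i, q i) ^ n *
            ∏ i, ∏ j, (p i ^ 2 + q j ^ 2)⁻¹) := by
          rw [Finset.prod_pow, Finset.prod_mul_distrib, Finset.prod_const, Finset.card_univ,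
            Fintype.card_fin, Finset.prod_mul_distrib, Finset.prod_const, Finset.card_univ,
            Fintype.card_fin]
  have hg0 : ∀ i : Fin n, 2 * (p i * q i) ≠ 0 := fun i =>
    mul_ne_zero two_ne_zero (mul_ne_zero (hp0 i) (hq0 i))
  have pair := prod_pair n (fun i => 2 * (p i * q i)) hg0
  have hGval : (∏ i, 2 * (p i * q i)) = (2:ℝ) ^ n * ((∏ i, p i) * ∏ i, q i) := by
    rw [Finset.prod_mul_distrib, Finset.prod_const, Finset.card_univ, Fintype.card_fin,
      Finset.prod_mul_distrib]
  have h3 : (∏ i, ∏ j ∈ Finset.Ioi i,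
        ((p i ^ 2 - p j ^ 2) * (2 * (p i * p j))⁻¹ *
          ((q i ^ 2 - q j ^ 2) * (2 * (q i * q j))⁻¹))) =
      (∏ i, ∏ j ∈ Finset.Ioi i, ((p j ^ 2 - p i ^ 2) * (q j ^ 2 - q i ^ 2))) *
        (((2:ℝ) ^ n * ((∏ i, p i) * ∏ i, q i)) ^ n *
          ((2:ℝ) ^ n * ((∏ i, p i) * ∏ i, q i))⁻¹)⁻¹ := by
    calc (∏ i, ∏ j ∈ Finset.Ioi i,
          ((p i ^ 2 - p j ^ 2) * (2 * (p i * p j))⁻¹ *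
            ((q i ^ 2 - q j ^ 2) * (2 * (q i * q j))⁻¹)))
        = ∏ i, ∏ j ∈ Finset.Ioi i,
            (((p j ^ 2 - p i ^ 2) * (q j ^ 2 - q i ^ 2)) *
              ((2 * (p i * q i)) * (2 * (p j * q j)))⁻¹) := by
          refine Finset.prod_congr rfl fun i _ => Finset.prod_congr rfl fun j _ => ?_
          have := hp0 i; have := hp0 j; have := hq0 i; have := hq0 j
          field_simp
          ring
      _ = (∏ i, ∏ j ∈ Finset.Ioi i, ((p j ^ 2 - p i ^ 2) * (q j ^ 2 - q i ^ 2))) *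
            ∏ i, ∏ j ∈ Finset.Ioi i, ((2 * (p i * q i)) * (2 * (p j * q j)))⁻¹ := by
          rw [← Finset.prod_mul_distrib]
          exact Finset.prod_congr rfl fun i _ => Finset.prod_mul_distrib
      _ = (∏ i, ∏ j ∈ Finset.Ioi i, ((p j ^ 2 - p i ^ 2) * (q j ^ 2 - q i ^ 2))) *
            (((2:ℝ) ^ n * ((∏ i, p i) * ∏ i, q i)) ^ n *
              ((2:ℝ) ^ n * ((∏ i, p i) * ∏ i, q i))⁻¹)⁻¹ := by
          simp only [Finset.prod_inv_distrib]
          rw [pair, hGval]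
  rw [h1, h2, h3, _root_.zpow_neg, zpow_natCast]
  have hE : (∏ i, ∏ j ∈ Finset.Ioi i, ((p j ^ 2 - p i ^ 2) * (q j ^ 2 - q i ^ 2))) =
      ∏ i, ∏ j ∈ Finset.Ioi i,
        ((fun i => p i ^ 2) j - (fun i => p i ^ 2) i) * ((fun j => q j ^ 2) j - (fun j => q j ^ 2) i) := rfl
  field_simp
  ring
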